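/- For integers n ≥ 1 and 0 ≤ k ≤ n/2, the partial binomial sum satisfies Σ_{i=0}^{k} C(n,i) ≤ 2^{n·h₂(k/n)}. -/

import Mathlib

/-- The binary entropy function (base 2). -/
noncomputable def binEnt (x : ℝ) : ℝ :=
  -(x * Real.logb 2 x) - (1 - x) * Real.logb 2 (1 - x)

theorem stmt_5 (n k : ℕ) (hn : 1 ≤ n) (hk : (k : ℝ) ≤ (n : ℝ) / 2) :
    ((∑ i ∈ Finset.range (k + 1), n.choose i : ℕ) : ℝ) ≤
      (2 : ℝ) ^ ((n : ℝ) * binEnt ((k : ℝ) / (n : ℝ))) := by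
  have hn0 : (0:ℝ) < n := by exact_mod_cast hn
  rcases Nat.eq_zero_or_pos k with hk0 | hk1
  · subst hk0
    simp [binEnt, Real.logb]
  -- k ≥ 1 case
  set p : ℝ := (k : ℝ) / n with hp_def
  have hkn : (k:ℝ) ≤ n := le_trans hk (by linarith)
  have hknn : k ≤ n := by exact_mod_cast hkn
  have hp0 : 0 < p := div_pos (by exact_mod_cast hk1) hn0
  have hp2 : p ≤ 1/2 := by
    rw [hp_def, div_le_div_iff₀ hn0 (by norm_num)]
    linarith
  have h1p : 0 < 1 - p := by linarith
  have hple : p ≤ 1 - p := by linarith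
  -- key sum inequality
  have key : ((∑ i ∈ Finset.range (k + 1), n.choose i : ℕ) : ℝ)
      * (p ^ k * (1 - p) ^ (n - k)) ≤ 1 := by
    have hbin : (∑ i ∈ Finset.range (n + 1),
        p ^ i * (1 - p) ^ (n - i) * n.choose i) = 1 := by
      rw [← add_pow]; simp
    calc ((∑ i ∈ Finset.range (k + 1), n.choose i : ℕ) : ℝ)
        * (p ^ k * (1 - p) ^ (n - k))
        = ∑ i ∈ Finset.range (k + 1),
          (p ^ k * (1 - p) ^ (n - k)) * n.choose i := by
          push_cast
          rw [Finset.sum_mul]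
          exact Finset.sum_congr rfl fun i _ => by ring
      _ ≤ ∑ i ∈ Finset.range (k + 1),
          p ^ i * (1 - p) ^ (n - i) * n.choose i := by
          apply Finset.sum_le_sum
          intro i hi
          have hik : i ≤ k := Nat.lt_succ_iff.mp (Finset.mem_range.mp hi)
          have h1 : p ^ k * (1 - p) ^ (n - k) ≤ p ^ i * (1 - p) ^ (n - i) := by
            have e1 : p ^ k = p ^ i * p ^ (k - i) := by
              rw [← pow_add, Nat.add_sub_cancel' hik]
            have e2 : (1 - p) ^ (n - i) = (1 - p) ^ (k - i) * (1 - p) ^ (n - k) := by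
              rw [← pow_add]
              congr 1
              omega
            rw [e1, e2]
            have h3 : p ^ (k - i) ≤ (1 - p) ^ (k - i) :=
              pow_le_pow_left₀ hp0.le hple _
            have := mul_le_mul_of_nonneg_left h3 (pow_nonneg hp0.le i)
            calc p ^ i * p ^ (k-i) * (1-p)^(n-k)
                ≤ p ^ i * (1-p) ^ (k-i) * (1-p)^(n-k) := by
                  apply mul_le_mul_of_nonneg_right _ (pow_nonneg h1p.le _)
                  exact this
              _ = p ^ i * ((1-p) ^ (k-i) * (1-p)^(n-k)) := by ring
          exact mul_le_mul_of_nonneg_right h1 (Nat.cast_nonneg _)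
      _ ≤ ∑ i ∈ Finset.range (n + 1),
          p ^ i * (1 - p) ^ (n - i) * n.choose i := by
          apply Finset.sum_le_sum_of_subset_of_nonneg
          · exact Finset.range_subset_range.mpr (by omega)
          · intro i _ _
            positivity
      _ = 1 := hbin
  -- rewrite the RHS
  have hrhs : (2 : ℝ) ^ ((n : ℝ) * binEnt p)
      = (p ^ k)⁻¹ * ((1 - p) ^ (n - k))⁻¹ := by
    have hnp : (n : ℝ) * p = k := by
      rw [hp_def]; field_simp
    have hn1p : (n : ℝ) * (1 - p) = ((n - k : ℕ) : ℝ) := by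
      push_cast [Nat.cast_sub hknn]
      rw [hp_def]; field_simp
    have hexp : (n : ℝ) * binEnt p
        = Real.logb 2 p * (-(k:ℝ)) + Real.logb 2 (1-p) * (-((n-k:ℕ):ℝ)) := by
      rw [binEnt]
      rw [← hnp, ← hn1p]
      ring
    rw [hexp, Real.rpow_add (by norm_num : (0:ℝ) < 2),
        Real.rpow_mul (by norm_num : (0:ℝ) ≤ 2),
        Real.rpow_mul (by norm_num : (0:ℝ) ≤ 2),
        Real.rpow_logb (by norm_num) (by norm_num) hp0,
        Real.rpow_logb (by norm_num) (by norm_num) h1p,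
        Real.rpow_neg hp0.le, Real.rpow_neg h1p.le,
        Real.rpow_natCast, Real.rpow_natCast]
  rw [hrhs]
  calc ((∑ i ∈ Finset.range (k + 1), n.choose i : ℕ) : ℝ)
      = (((∑ i ∈ Finset.range (k + 1), n.choose i : ℕ) : ℝ)
        * (p ^ k * (1 - p) ^ (n - k))) * ((p ^ k)⁻¹ * ((1 - p) ^ (n - k))⁻¹) := by
        field_simp
    _ ≤ 1 * ((p ^ k)⁻¹ * ((1 - p) ^ (n - k))⁻¹) := by
        apply mul_le_mul_of_nonneg_right key
        positivity
    _ = (p ^ k)⁻¹ * ((1 - p) ^ (n - k))⁻¹ := by ring
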